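/- Let (W,w) be a fusion frame for H. Then the set {A ∈ 𝔏_{T*_{W,w}} : max_{1≤i≤m} ‖A M_i T*_{W,w}‖_F = min_{B ∈ 𝔏_{T*_{W,w}}} max_{1≤i≤m} ‖B M_i T*_{W,w}‖_F} is a non-empty, compact and convex subset of L(𝒲,H). -/

import Mathlib

noncomputable section

open scoped InnerProductSpace

variable {𝕜 : Type} [RCLike 𝕜]
variable {H : Type} [NormedAddCommGroup H] [InnerProductSpace 𝕜 H] [FiniteDimensional 𝕜 H]
variable {m : ℕ}

/-- The Hilbert space `𝒲 = ⊕ᵢ Wᵢ` of a fusion sequence, with the ℓ² inner product. -/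
abbrev FFSpace (W : Fin m → Submodule 𝕜 H) : Type := PiLp 2 (fun i => ↥(W i))

/-- The synthesis operator `T_{W,w} : 𝒲 → H`, `(fᵢ)ᵢ ↦ Σᵢ wᵢ fᵢ`. -/
def synthOp (W : Fin m → Submodule 𝕜 H) (w : Fin m → ℝ) : FFSpace W →ₗ[𝕜] H where
  toFun f := ∑ i, (w i : 𝕜) • (f i : H)
  map_add' f g := by
    simp [Finset.sum_add_distrib, smul_add]
  map_smul' c f := by
    simp [Finset.smul_sum]
    congr 1; funext i; rw [smul_comm]

/-- The analysis operator `T*_{W,w} : H → 𝒲`, `f ↦ (wᵢ π_{Wᵢ} f)ᵢ`. -/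
def analysisOp (W : Fin m → Submodule 𝕜 H) (w : Fin m → ℝ) : H →ₗ[𝕜] FFSpace W where
  toFun f := WithLp.toLp 2 (fun i => (w i : 𝕜) • ((W i).orthogonalProjection f))
  map_add' f g := by
    ext i; simp [smul_add]
  map_smul' c f := by
    ext i; simp; rw [smul_comm]

/-- The coordinate operator `M_{J,W} : 𝒲 → 𝒲`, keeping the coordinates in `J`. -/
def MJ (W : Fin m → Submodule 𝕜 H) (J : Finset (Fin m)) : FFSpace W →ₗ[𝕜] FFSpace W where
  toFun f := WithLp.toLp 2 (fun j => if j ∈ J then f j else 0)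
  map_add' f g := by
    ext j; by_cases h : j ∈ J <;> simp [h]
  map_smul' c f := by
    ext j; by_cases h : j ∈ J <;> simp [h]

/-- `Q : 𝒲 → 𝒱` is block-diagonal if `Q M_{j,W} 𝒲 ⊆ M_{j,V} 𝒱` for all `j`. -/
def IsBlockDiagonal (W V : Fin m → Submodule 𝕜 H) (Q : FFSpace W →ₗ[𝕜] FFSpace V) : Prop :=
  ∀ j, LinearMap.range (Q ∘ₗ MJ W {j}) ≤ LinearMap.range (MJ V {j})

/-- `Q : 𝒲 → 𝒱` is component preserving if `Q M_{j,W} 𝒲 = M_{j,V} 𝒱` for all `j`. -/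
def IsComponentPreserving (W V : Fin m → Submodule 𝕜 H) (Q : FFSpace W →ₗ[𝕜] FFSpace V) : Prop :=
  ∀ j, LinearMap.range (Q ∘ₗ MJ W {j}) = LinearMap.range (MJ V {j})

/-- The orthogonal projection onto `U` as an endomorphism of `H`. -/
def projL (U : Submodule 𝕜 H) : H →ₗ[𝕜] H :=
  U.subtype ∘ₗ (U.orthogonalProjection : H →L[𝕜] U).toLinearMap

/-- The squared Frobenius norm `‖B‖_F² = tr(B*B)` of a linear map between
finite-dimensional inner product spaces. -/
def frobSq {𝕜 : Type} [RCLike 𝕜] {E F : Type} [NormedAddCommGroup E] [InnerProductSpace 𝕜 E]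
    [FiniteDimensional 𝕜 E] [NormedAddCommGroup F] [InnerProductSpace 𝕜 F]
    [FiniteDimensional 𝕜 F] (B : E →ₗ[𝕜] F) : ℝ :=
  RCLike.re (LinearMap.trace 𝕜 E (LinearMap.adjoint B ∘ₗ B))

/-- The worst-case one-erasure error `max_i ‖A Mᵢ T*_{W,w}‖_F` of a reconstruction
operator `A : 𝒲 → H`. -/
def maxErr (W : Fin m → Submodule 𝕜 H) (w : Fin m → ℝ) (A : FFSpace W →L[𝕜] H) : ℝ :=
  ⨆ i : Fin m, Real.sqrt (frobSq ((A : FFSpace W →ₗ[𝕜] H) ∘ₗ MJ W {i} ∘ₗ analysisOp W w))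

/-- The set of left inverses of `T*_{W,w}` minimizing the worst-case one-erasure error. -/
def optimalSet (W : Fin m → Submodule 𝕜 H) (w : Fin m → ℝ) : Set (FFSpace W →L[𝕜] H) :=
  {A | A ∘L LinearMap.toContinuousLinearMap (analysisOp W w) = ContinuousLinearMap.id 𝕜 H ∧
    maxErr W w A =
      ⨅ B : {B : FFSpace W →L[𝕜] H //
          B ∘L LinearMap.toContinuousLinearMap (analysisOp W w) = ContinuousLinearMap.id 𝕜 H},
        maxErr W w ↑B}

section AuxiliaryLemmas

variable {𝕜 : Type} [RCLike 𝕜]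

section Frob

variable {E F : Type} [NormedAddCommGroup E] [InnerProductSpace 𝕜 E] [FiniteDimensional 𝕜 E]
  [NormedAddCommGroup F] [InnerProductSpace 𝕜 F] [FiniteDimensional 𝕜 F]

lemma aux_trace_eq_sum_inner (T : E →ₗ[𝕜] E) :
    LinearMap.trace 𝕜 E T = ∑ j, ⟪stdOrthonormalBasis 𝕜 E j, T (stdOrthonormalBasis 𝕜 E j)⟫_𝕜 := by
  classical
  rw [LinearMap.trace_eq_matrix_trace 𝕜 (stdOrthonormalBasis 𝕜 E).toBasis, Matrix.trace]
  congr 1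
  funext j
  rw [Matrix.diag_apply, LinearMap.toMatrix_apply, OrthonormalBasis.coe_toBasis_repr_apply,
    OrthonormalBasis.repr_apply_apply, OrthonormalBasis.coe_toBasis]

lemma frobSq_eq_sum (B : E →ₗ[𝕜] F) :
    frobSq B = ∑ j, ‖B (stdOrthonormalBasis 𝕜 E j)‖ ^ 2 := by
  rw [frobSq, aux_trace_eq_sum_inner, map_sum]
  congr 1
  funext j
  rw [LinearMap.comp_apply, LinearMap.adjoint_inner_right, inner_self_eq_norm_sq]

lemma frobSq_nonneg (B : E →ₗ[𝕜] F) : 0 ≤ frobSq B := by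
  rw [frobSq_eq_sum]; positivity

lemma sqrt_frobSq_add_le (B C : E →ₗ[𝕜] F) :
    Real.sqrt (frobSq (B + C)) ≤ Real.sqrt (frobSq B) + Real.sqrt (frobSq C) := by
  set b := stdOrthonormalBasis 𝕜 E
  set u : EuclideanSpace ℝ (Fin (Module.finrank 𝕜 E)) := WithLp.toLp 2 (fun j => ‖B (b j)‖)
  set v : EuclideanSpace ℝ (Fin (Module.finrank 𝕜 E)) := WithLp.toLp 2 (fun j => ‖C (b j)‖)
  have hu : Real.sqrt (frobSq B) = ‖u‖ := by
    rw [frobSq_eq_sum, EuclideanSpace.norm_eq]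
    congr 1; apply Finset.sum_congr rfl; intro j _
    simp [u, b, sq_abs]
  have hv : Real.sqrt (frobSq C) = ‖v‖ := by
    rw [frobSq_eq_sum, EuclideanSpace.norm_eq]
    congr 1; apply Finset.sum_congr rfl; intro j _
    simp [v, b, sq_abs]
  have huv : Real.sqrt (frobSq (B + C)) ≤ ‖u + v‖ := by
    rw [frobSq_eq_sum, EuclideanSpace.norm_eq]
    apply Real.sqrt_le_sqrt
    apply Finset.sum_le_sum
    intro j _
    have h1 : ‖(B + C) (b j)‖ ≤ ‖u j + v j‖ := by
      simp only [LinearMap.add_apply, u, v]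
      rw [Real.norm_eq_abs, abs_of_nonneg (by positivity)]
      exact norm_add_le _ _
    calc ‖(B + C) (b j)‖ ^ 2 ≤ ‖u j + v j‖ ^ 2 := by
          apply pow_le_pow_left₀ (norm_nonneg _) h1
      _ = ‖(u + v) j‖ ^ 2 := rfl
  calc Real.sqrt (frobSq (B + C)) ≤ ‖u + v‖ := huv
    _ ≤ ‖u‖ + ‖v‖ := norm_add_le _ _
    _ = _ := by rw [hu, hv]

lemma sqrt_frobSq_smul (c : 𝕜) (B : E →ₗ[𝕜] F) :
    Real.sqrt (frobSq (c • B)) = ‖c‖ * Real.sqrt (frobSq B) := by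
  have : frobSq (c • B) = ‖c‖ ^ 2 * frobSq B := by
    rw [frobSq_eq_sum, frobSq_eq_sum, Finset.mul_sum]
    apply Finset.sum_congr rfl; intro j _
    simp [norm_smul, mul_pow]
  rw [this, Real.sqrt_mul (by positivity), Real.sqrt_sq (norm_nonneg c)]

lemma norm_apply_le_sqrt_frobSq (B : E →ₗ[𝕜] F) (x : E) :
    ‖B x‖ ≤ Real.sqrt (frobSq B) * ‖x‖ := by
  set b := stdOrthonormalBasis 𝕜 E
  have hx : x = ∑ j, ⟪b j, x⟫_𝕜 • b j := (b.sum_repr' x).symm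
  have h1 : ‖B x‖ ≤ ∑ j, ‖⟪b j, x⟫_𝕜‖ * ‖B (b j)‖ := by
    conv_lhs => rw [hx, map_sum]
    refine (norm_sum_le _ _).trans ?_
    apply Finset.sum_le_sum; intro j _
    rw [map_smul, norm_smul]
  have h2 : ∑ j, ‖⟪b j, x⟫_𝕜‖ * ‖B (b j)‖ ≤
      Real.sqrt (∑ j, ‖⟪b j, x⟫_𝕜‖ ^ 2) * Real.sqrt (∑ j, ‖B (b j)‖ ^ 2) := by
    rw [← Real.sqrt_mul (by positivity)]
    rw [show (∑ j, ‖⟪b j, x⟫_𝕜‖ * ‖B (b j)‖) =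
      Real.sqrt ((∑ j, ‖⟪b j, x⟫_𝕜‖ * ‖B (b j)‖) ^ 2) from
      (Real.sqrt_sq (by positivity)).symm]
    exact Real.sqrt_le_sqrt (Finset.sum_mul_sq_le_sq_mul_sq _ _ _)
  have h3 : ∑ j, ‖⟪b j, x⟫_𝕜‖ ^ 2 = ‖x‖ ^ 2 := by
    have hp := congrArg (fun z => RCLike.re (K := 𝕜) z) (b.sum_inner_mul_inner x x)
    simp only [map_sum] at hp
    rw [← inner_self_eq_norm_sq (𝕜 := 𝕜) x, ← hp]
    apply Finset.sum_congr rfl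
    intro j _
    rw [← inner_conj_symm x (b j), RCLike.conj_mul]
    norm_cast
  rw [frobSq_eq_sum]
  calc ‖B x‖ ≤ _ := h1
    _ ≤ _ := h2
    _ = _ := by rw [h3, Real.sqrt_sq (norm_nonneg x), mul_comm]

lemma sqrt_frobSq_comp_le {G : Type} [NormedAddCommGroup G] [InnerProductSpace 𝕜 G]
    [FiniteDimensional 𝕜 G] (A : F →L[𝕜] G) (K : E →ₗ[𝕜] F) :
    Real.sqrt (frobSq ((A : F →ₗ[𝕜] G) ∘ₗ K)) ≤ ‖A‖ * Real.sqrt (frobSq K) := by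
  have h : frobSq ((A : F →ₗ[𝕜] G) ∘ₗ K) ≤ ‖A‖ ^ 2 * frobSq K := by
    rw [frobSq_eq_sum, frobSq_eq_sum, Finset.mul_sum]
    apply Finset.sum_le_sum
    intro j _
    rw [LinearMap.comp_apply]
    calc ‖A (K (stdOrthonormalBasis 𝕜 E j))‖ ^ 2
        ≤ (‖A‖ * ‖K (stdOrthonormalBasis 𝕜 E j)‖) ^ 2 := by
          apply pow_le_pow_left₀ (norm_nonneg _) (A.le_opNorm _)
      _ = ‖A‖ ^ 2 * ‖K (stdOrthonormalBasis 𝕜 E j)‖ ^ 2 := by ring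
  calc Real.sqrt (frobSq ((A : F →ₗ[𝕜] G) ∘ₗ K)) ≤ Real.sqrt (‖A‖ ^ 2 * frobSq K) :=
        Real.sqrt_le_sqrt h
    _ = ‖A‖ * Real.sqrt (frobSq K) := by
        rw [Real.sqrt_mul (by positivity), Real.sqrt_sq (norm_nonneg _)]

end Frob

variable {H : Type} [NormedAddCommGroup H] [InnerProductSpace 𝕜 H] [FiniteDimensional 𝕜 H]
variable {m : ℕ}

/-- The operator `M_i T*` appearing in `maxErr`. -/
def Kop (W : Fin m → Submodule 𝕜 H) (w : Fin m → ℝ) (i : Fin m) : H →ₗ[𝕜] FFSpace W :=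
  MJ W {i} ∘ₗ analysisOp W w

lemma maxErr_eq (W : Fin m → Submodule 𝕜 H) (w : Fin m → ℝ) (A : FFSpace W →L[𝕜] H) :
    maxErr W w A = ⨆ i : Fin m,
      Real.sqrt (frobSq ((A : FFSpace W →ₗ[𝕜] H) ∘ₗ Kop W w i)) := rfl

lemma maxErr_nonneg (W : Fin m → Submodule 𝕜 H) (w : Fin m → ℝ) (A : FFSpace W →L[𝕜] H) :
    0 ≤ maxErr W w A :=
  Real.iSup_nonneg fun _ => Real.sqrt_nonneg _

lemma sqrt_frobSq_le_maxErr (W : Fin m → Submodule 𝕜 H) (w : Fin m → ℝ)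
    (A : FFSpace W →L[𝕜] H) (i : Fin m) :
    Real.sqrt (frobSq ((A : FFSpace W →ₗ[𝕜] H) ∘ₗ Kop W w i)) ≤ maxErr W w A := by
  rw [maxErr_eq]
  exact le_ciSup (f := fun i => Real.sqrt (frobSq ((A : FFSpace W →ₗ[𝕜] H) ∘ₗ Kop W w i)))
    (Set.Finite.bddAbove (Set.finite_range _)) i

lemma maxErr_combo (W : Fin m → Submodule 𝕜 H) (w : Fin m → ℝ)
    (A B : FFSpace W →L[𝕜] H) (t s : ℝ) (ht : 0 ≤ t) (hs : 0 ≤ s) :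
    maxErr W w ((t : 𝕜) • A + (s : 𝕜) • B) ≤ t * maxErr W w A + s * maxErr W w B := by
  rw [maxErr_eq]
  apply Real.iSup_le _ (add_nonneg (mul_nonneg ht (maxErr_nonneg W w A))
    (mul_nonneg hs (maxErr_nonneg W w B)))
  intro i
  have hco : (((t : 𝕜) • A + (s : 𝕜) • B : FFSpace W →L[𝕜] H) : FFSpace W →ₗ[𝕜] H) ∘ₗ Kop W w i
      = (t : 𝕜) • ((A : FFSpace W →ₗ[𝕜] H) ∘ₗ Kop W w i)
        + (s : 𝕜) • ((B : FFSpace W →ₗ[𝕜] H) ∘ₗ Kop W w i) := by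
    ext x
    simp
  rw [hco]
  calc Real.sqrt (frobSq ((t : 𝕜) • ((A : FFSpace W →ₗ[𝕜] H) ∘ₗ Kop W w i)
        + (s : 𝕜) • ((B : FFSpace W →ₗ[𝕜] H) ∘ₗ Kop W w i)))
      ≤ Real.sqrt (frobSq ((t : 𝕜) • ((A : FFSpace W →ₗ[𝕜] H) ∘ₗ Kop W w i)))
        + Real.sqrt (frobSq ((s : 𝕜) • ((B : FFSpace W →ₗ[𝕜] H) ∘ₗ Kop W w i))) :=
        sqrt_frobSq_add_le _ _
    _ = t * Real.sqrt (frobSq ((A : FFSpace W →ₗ[𝕜] H) ∘ₗ Kop W w i))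
        + s * Real.sqrt (frobSq ((B : FFSpace W →ₗ[𝕜] H) ∘ₗ Kop W w i)) := by
        rw [sqrt_frobSq_smul, sqrt_frobSq_smul, RCLike.norm_ofReal, RCLike.norm_ofReal,
          abs_of_nonneg ht, abs_of_nonneg hs]
    _ ≤ t * maxErr W w A + s * maxErr W w B := by
        have h1 := sqrt_frobSq_le_maxErr W w A i
        have h2 := sqrt_frobSq_le_maxErr W w B i
        nlinarith

lemma maxErr_add_le (W : Fin m → Submodule 𝕜 H) (w : Fin m → ℝ)
    (A B : FFSpace W →L[𝕜] H) :
    maxErr W w (A + B) ≤ maxErr W w A + maxErr W w B := by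
  have := maxErr_combo W w A B 1 1 zero_le_one zero_le_one
  simpa using this

lemma maxErr_le_mul_norm (W : Fin m → Submodule 𝕜 H) (w : Fin m → ℝ)
    (A : FFSpace W →L[𝕜] H) :
    maxErr W w A ≤ (∑ i, Real.sqrt (frobSq (Kop W w i))) * ‖A‖ := by
  rw [maxErr_eq]
  apply Real.iSup_le _ (by positivity)
  intro i
  calc Real.sqrt (frobSq ((A : FFSpace W →ₗ[𝕜] H) ∘ₗ Kop W w i))
      ≤ ‖A‖ * Real.sqrt (frobSq (Kop W w i)) := sqrt_frobSq_comp_le A _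
    _ ≤ ‖A‖ * ∑ j, Real.sqrt (frobSq (Kop W w j)) := by
        apply mul_le_mul_of_nonneg_left _ (norm_nonneg A)
        exact Finset.single_le_sum (f := fun j => Real.sqrt (frobSq (Kop W w j)))
          (fun j _ => Real.sqrt_nonneg _) (Finset.mem_univ i)
    _ = _ := mul_comm _ _

lemma maxErr_continuous (W : Fin m → Submodule 𝕜 H) (w : Fin m → ℝ) :
    Continuous (maxErr W w) := by
  set C : ℝ := ∑ i, Real.sqrt (frobSq (Kop W w i)) with hCdef
  have hC : 0 ≤ C := by positivity
  have key : ∀ A B : FFSpace W →L[𝕜] H, maxErr W w A - maxErr W w B ≤ C * ‖A - B‖ := by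
    intro A B
    have h1 : maxErr W w A ≤ maxErr W w B + maxErr W w (A - B) := by
      have := maxErr_add_le W w B (A - B)
      simpa using this
    have h2 : maxErr W w (A - B) ≤ C * ‖A - B‖ := maxErr_le_mul_norm W w (A - B)
    linarith
  have : LipschitzWith C.toNNReal (maxErr W w) := by
    apply LipschitzWith.of_dist_le_mul
    intro A B
    rw [show dist A B = ‖A - B‖ from dist_eq_norm A B, Real.dist_eq,
      Real.coe_toNNReal _ hC, abs_sub_le_iff]
    exact ⟨key A B, by have h := key B A; rwa [norm_sub_rev B A] at h⟩
  exact this.continuous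

lemma piLp_apply_norm_le (W : Fin m → Submodule 𝕜 H) (x : FFSpace W) (i : Fin m) :
    ‖x i‖ ≤ ‖x‖ := by
  have h := PiLp.norm_sq_eq_of_L2 (fun i => ↥(W i)) x
  nlinarith [Finset.single_le_sum (f := fun j => ‖x j‖ ^ 2) (fun j _ => by positivity)
    (Finset.mem_univ i), norm_nonneg x, norm_nonneg (x i)]

lemma sum_MJ_single (W : Fin m → Submodule 𝕜 H) (x : FFSpace W) :
    ∑ i, MJ W {i} x = x := by
  ext j
  rw [WithLp.ofLp_sum, Finset.sum_apply]
  simp [MJ]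

lemma Kop_apply_eq (W : Fin m → Submodule 𝕜 H) (w : Fin m → ℝ) (hw : ∀ i, 0 < w i)
    (x : FFSpace W) (i : Fin m) :
    Kop W w i ((((w i)⁻¹ : ℝ) : 𝕜) • (x i : H)) = MJ W {i} x := by
  ext j
  simp only [Kop, LinearMap.comp_apply, analysisOp, MJ, LinearMap.coe_mk, AddHom.coe_mk,
    WithLp.ofLp_toLp]
  by_cases hj : j = i
  · subst hj
    simp only [Finset.mem_singleton, if_pos rfl]
    rw [map_smul, smul_smul, ← RCLike.ofReal_mul, mul_inv_cancel₀ (hw j).ne', RCLike.ofReal_one,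
      one_smul, Submodule.orthogonalProjectionOnto_mem_subspace_eq_self]
  · simp [Finset.mem_singleton, hj]

lemma opNorm_le_maxErr (W : Fin m → Submodule 𝕜 H) (w : Fin m → ℝ) (hw : ∀ i, 0 < w i)
    (A : FFSpace W →L[𝕜] H) :
    ‖A‖ ≤ (∑ i, (w i)⁻¹) * maxErr W w A := by
  have hsum : (0:ℝ) ≤ ∑ i, (w i)⁻¹ := by
    apply Finset.sum_nonneg; intro i _; exact (inv_nonneg.mpr (hw i).le)
  apply ContinuousLinearMap.opNorm_le_bound _ (mul_nonneg hsum (maxErr_nonneg W w A))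
  intro x
  have hx : A x = ∑ i, A (MJ W {i} x) := by
    rw [← map_sum, sum_MJ_single]
  rw [hx]
  calc ‖∑ i, A (MJ W {i} x)‖ ≤ ∑ i, ‖A (MJ W {i} x)‖ := norm_sum_le _ _
    _ ≤ ∑ i, (w i)⁻¹ * (maxErr W w A * ‖x‖) := by
        apply Finset.sum_le_sum
        intro i _
        have heq : A (MJ W {i} x)
            = ((A : FFSpace W →ₗ[𝕜] H) ∘ₗ Kop W w i) ((((w i)⁻¹ : ℝ) : 𝕜) • (x i : H)) := by
          rw [LinearMap.comp_apply, Kop_apply_eq W w hw x i]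
          rfl
        rw [heq]
        calc ‖((A : FFSpace W →ₗ[𝕜] H) ∘ₗ Kop W w i) ((((w i)⁻¹ : ℝ) : 𝕜) • (x i : H))‖
            ≤ Real.sqrt (frobSq ((A : FFSpace W →ₗ[𝕜] H) ∘ₗ Kop W w i))
              * ‖(((w i)⁻¹ : ℝ) : 𝕜) • (x i : H)‖ := norm_apply_le_sqrt_frobSq _ _
          _ ≤ maxErr W w A * ((w i)⁻¹ * ‖x‖) := by
              apply mul_le_mul (sqrt_frobSq_le_maxErr W w A i) _ (norm_nonneg _)
                (maxErr_nonneg W w A)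
              rw [norm_smul, RCLike.norm_ofReal, abs_of_nonneg (inv_nonneg.mpr (hw i).le)]
              apply mul_le_mul_of_nonneg_left _ (inv_nonneg.mpr (hw i).le)
              calc ‖(x i : H)‖ = ‖x i‖ := rfl
                _ ≤ ‖x‖ := piLp_apply_norm_le W x i
          _ = (w i)⁻¹ * (maxErr W w A * ‖x‖) := by ring
    _ = (∑ i, (w i)⁻¹) * maxErr W w A * ‖x‖ := by rw [← Finset.sum_mul]; ring

lemma analysisOp_ker (W : Fin m → Submodule 𝕜 H) (w : Fin m → ℝ) (hw : ∀ i, 0 < w i)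
    (hW : ⨆ i, W i = ⊤) : LinearMap.ker (analysisOp W w) = ⊥ := by
  apply LinearMap.ker_eq_bot'.mpr
  intro f hf
  have h1 : ∀ i, f ∈ (W i)ᗮ := by
    intro i
    have hcomp : ((w i : ℝ) : 𝕜) • ((W i).orthogonalProjection f) = 0 :=
      congrArg (fun z : FFSpace W => z i) hf
    rcases smul_eq_zero.mp hcomp with h | h
    · exfalso
      exact (hw i).ne' (by exact_mod_cast h)
    · exact Submodule.orthogonalProjectionOnto_eq_zero_iff.mp h
  have h2 : f ∈ (⨆ i, W i)ᗮ := by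
    rw [← Submodule.iInf_orthogonal]
    exact Submodule.mem_iInf _ |>.mpr h1
  rw [hW, Submodule.top_orthogonal_eq_bot] at h2
  simpa using h2

lemma exists_leftInverse (W : Fin m → Submodule 𝕜 H) (w : Fin m → ℝ) (hw : ∀ i, 0 < w i)
    (hW : ⨆ i, W i = ⊤) :
    ∃ A : FFSpace W →L[𝕜] H,
      A ∘L LinearMap.toContinuousLinearMap (analysisOp W w) = ContinuousLinearMap.id 𝕜 H := by
  obtain ⟨g, hg⟩ := (analysisOp W w).exists_leftInverse_of_injective (analysisOp_ker W w hw hW)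
  refine ⟨LinearMap.toContinuousLinearMap g, ?_⟩
  ext x
  have := LinearMap.ext_iff.mp hg x
  simpa using this

end AuxiliaryLemmas


/-- for a fusion frame `(W,w)`, the set of left inverses of `T*_{W,w}`
minimizing the worst-case one-erasure error is non-empty, compact and convex
(convexity for real coefficients, acting through `𝕜`). -/
theorem optimalSet_nonempty_compact_convex
    {𝕜 : Type} [RCLike 𝕜] {H : Type} [NormedAddCommGroup H] [InnerProductSpace 𝕜 H]
    [FiniteDimensional 𝕜 H] {m : ℕ}
    (W : Fin m → Submodule 𝕜 H) (w : Fin m → ℝ) (hw : ∀ i, 0 < w i) (hW : ⨆ i, W i = ⊤) :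
    (optimalSet W w).Nonempty ∧ IsCompact (optimalSet W w) ∧
    (∀ A ∈ optimalSet W w, ∀ B ∈ optimalSet W w, ∀ t : ℝ, 0 ≤ t → t ≤ 1 →
      ((t : 𝕜) • A + ((1 - t : ℝ) : 𝕜) • B) ∈ optimalSet W w) := by
  classical
  haveI hproper : ProperSpace (FFSpace W →L[𝕜] H) := FiniteDimensional.proper 𝕜 (FFSpace W →L[𝕜] H)
  obtain ⟨A₀, hA₀⟩ := exists_leftInverse W w hw hW
  have hC : (0:ℝ) ≤ ∑ i, (w i)⁻¹ :=
    Finset.sum_nonneg fun i _ => inv_nonneg.mpr (hw i).le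
  have hcoerc := opNorm_le_maxErr W w hw
  have hScl : IsClosed {A : FFSpace W →L[𝕜] H |
      A ∘L LinearMap.toContinuousLinearMap (analysisOp W w) = ContinuousLinearMap.id 𝕜 H} := by
    have hcont : Continuous (fun A : FFSpace W →L[𝕜] H =>
        A ∘L LinearMap.toContinuousLinearMap (analysisOp W w)) :=
      ((ContinuousLinearMap.compL 𝕜 H (FFSpace W) H).flip
        (LinearMap.toContinuousLinearMap (analysisOp W w))).continuous
    exact isClosed_singleton.preimage hcont
  haveI hne : Nonempty {B : FFSpace W →L[𝕜] H //
      B ∘L LinearMap.toContinuousLinearMap (analysisOp W w) = ContinuousLinearMap.id 𝕜 H} :=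
    ⟨⟨A₀, hA₀⟩⟩
  have hbdd : BddBelow (Set.range fun B : {B : FFSpace W →L[𝕜] H //
      B ∘L LinearMap.toContinuousLinearMap (analysisOp W w) = ContinuousLinearMap.id 𝕜 H} =>
        maxErr W w ↑B) := by
    refine ⟨0, ?_⟩
    rintro y ⟨B, rfl⟩
    exact maxErr_nonneg W w _
  set μ : ℝ := ⨅ B : {B : FFSpace W →L[𝕜] H //
      B ∘L LinearMap.toContinuousLinearMap (analysisOp W w) = ContinuousLinearMap.id 𝕜 H},
      maxErr W w ↑B with hμdef
  have hmem_iff : ∀ A : FFSpace W →L[𝕜] H, A ∈ optimalSet W w ↔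
      (A ∘L LinearMap.toContinuousLinearMap (analysisOp W w) = ContinuousLinearMap.id 𝕜 H ∧
        maxErr W w A = μ) := fun A => Iff.rfl
  -- existence of a minimizer
  set K : Set (FFSpace W →L[𝕜] H) := {A |
      A ∘L LinearMap.toContinuousLinearMap (analysisOp W w) = ContinuousLinearMap.id 𝕜 H} ∩
      {A | maxErr W w A ≤ maxErr W w A₀} with hKdef
  have hKcompact : IsCompact K := by
    apply Metric.isCompact_of_isClosed_isBounded (α := FFSpace W →L[𝕜] H)
    · exact hScl.inter (isClosed_le (maxErr_continuous W w) continuous_const)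
    · have hsub : K ⊆ Metric.closedBall 0 ((∑ i, (w i)⁻¹) * maxErr W w A₀) := by
        intro A hA
        rw [Metric.mem_closedBall]
        calc dist A 0 = ‖A‖ := dist_zero_right A
          _ ≤ (∑ i, (w i)⁻¹) * maxErr W w A := hcoerc A
          _ ≤ (∑ i, (w i)⁻¹) * maxErr W w A₀ := mul_le_mul_of_nonneg_left hA.2 hC
      exact Metric.isBounded_closedBall.subset hsub
  have hKne : K.Nonempty := ⟨A₀, hA₀, (by simp : A₀ ∈ {A | maxErr W w A ≤ maxErr W w A₀})⟩
  obtain ⟨A₁, hA₁K, hA₁min⟩ := hKcompact.exists_isMinOn hKne ((maxErr_continuous W w).continuousOn)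
  have hopt : ∀ B : FFSpace W →L[𝕜] H,
      B ∘L LinearMap.toContinuousLinearMap (analysisOp W w) = ContinuousLinearMap.id 𝕜 H →
      maxErr W w A₁ ≤ maxErr W w B := by
    intro B hB
    by_cases h : maxErr W w B ≤ maxErr W w A₀
    · exact isMinOn_iff.mp hA₁min B ⟨hB, h⟩
    · exact le_trans (isMinOn_iff.mp hA₁min A₀ ⟨hA₀, (by simp : A₀ ∈ {A | maxErr W w A ≤ maxErr W w A₀})⟩) (le_of_not_ge h)
  have hA₁μ : maxErr W w A₁ = μ := by
    apply le_antisymm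
    · rw [hμdef]
      exact le_ciInf fun B => hopt ↑B B.2
    · exact ciInf_le hbdd ⟨A₁, hA₁K.1⟩
  refine ⟨⟨A₁, (hmem_iff A₁).mpr ⟨hA₁K.1, hA₁μ⟩⟩, ?_, ?_⟩
  · -- compactness
    have hset : optimalSet W w = {A : FFSpace W →L[𝕜] H |
        A ∘L LinearMap.toContinuousLinearMap (analysisOp W w) = ContinuousLinearMap.id 𝕜 H} ∩
        {A | maxErr W w A = μ} := by
      ext A
      exact (hmem_iff A).trans (Iff.symm (Set.mem_inter_iff A _ _))
    rw [hset]
    apply Metric.isCompact_of_isClosed_isBounded (α := FFSpace W →L[𝕜] H)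
    · exact hScl.inter (isClosed_eq (maxErr_continuous W w) continuous_const)
    · have hsub : ({A : FFSpace W →L[𝕜] H |
          A ∘L LinearMap.toContinuousLinearMap (analysisOp W w) = ContinuousLinearMap.id 𝕜 H} ∩
          {A | maxErr W w A = μ}) ⊆ Metric.closedBall 0 ((∑ i, (w i)⁻¹) * μ) := by
        intro A hA
        rw [Metric.mem_closedBall]
        calc dist A 0 = ‖A‖ := dist_zero_right A
          _ ≤ (∑ i, (w i)⁻¹) * maxErr W w A := hcoerc A
          _ = (∑ i, (w i)⁻¹) * μ := by rw [hA.2]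
      exact Metric.isBounded_closedBall.subset hsub
  · -- convexity
    intro A hA B hB t ht ht1
    obtain ⟨hA1, hA2⟩ := (hmem_iff A).mp hA
    obtain ⟨hB1, hB2⟩ := (hmem_iff B).mp hB
    have hcombS : ((t : 𝕜) • A + ((1 - t : ℝ) : 𝕜) • B) ∘L
        LinearMap.toContinuousLinearMap (analysisOp W w) = ContinuousLinearMap.id 𝕜 H := by
      rw [ContinuousLinearMap.add_comp, ContinuousLinearMap.smul_comp,
        ContinuousLinearMap.smul_comp, hA1, hB1]
      ext x
      simp only [ContinuousLinearMap.add_apply, ContinuousLinearMap.coe_smul',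
        Pi.smul_apply, ContinuousLinearMap.coe_id', id_eq]
      rw [← add_smul]
      have h1 : ((t : ℝ) : 𝕜) + ((1 - t : ℝ) : 𝕜) = 1 := by
        push_cast
        ring
      rw [h1, one_smul]
    have h1 : maxErr W w ((t : 𝕜) • A + ((1 - t : ℝ) : 𝕜) • B) ≤ μ := by
      have hcb := maxErr_combo W w A B t (1 - t) ht (by linarith)
      rw [hA2, hB2] at hcb
      calc maxErr W w ((t : 𝕜) • A + ((1 - t : ℝ) : 𝕜) • B) ≤ t * μ + (1 - t) * μ := hcb
        _ = μ := by ring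
    have h2 : μ ≤ maxErr W w ((t : 𝕜) • A + ((1 - t : ℝ) : 𝕜) • B) :=
      ciInf_le hbdd ⟨(t : 𝕜) • A + ((1 - t : ℝ) : 𝕜) • B, hcombS⟩
    exact (hmem_iff _).mpr ⟨hcombS, le_antisymm h1 h2⟩
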